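/- Suppose g is differentiable strictly convex and α* minimizes the population objective BD_g(α) := E[-g(α(X)) + g'(α(X))α(X) - m(W, g'∘α)] over a class A containing the true Riesz representer α₀. Then α* = α₀ μ-almost everywhere (for α₀ the essentially unique minimizer). -/
import Mathlib


open MeasureTheory

/-- Strict Bregman positivity: for a differentiable strictly convex `g`,
`0 < g a - g b - g' b * (a - b)` whenever `a ≠ b`. -/
lemma bregman_pos_of_ne {g : ℝ → ℝ} (hdiff : Differentiable ℝ g)
    (hconv : StrictConvexOn ℝ Set.univ g) {a b : ℝ} (h : a ≠ b) :
    0 < g a - g b - deriv g b * (a - b) := by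
  rcases lt_or_gt_of_ne h with hab | hab
  · -- a < b : slope_lt_deriv with x = a, y = b
    have h1 := hconv.slope_lt_deriv (Set.mem_univ a) (Set.mem_univ b) hab (hdiff b)
    rw [slope_def_field] at h1
    have hba : 0 < b - a := by linarith
    have h2 := (div_lt_iff₀ hba).mp h1
    nlinarith
  · -- b < a : deriv_lt_slope with x = b, y = a
    have h1 := hconv.deriv_lt_slope (Set.mem_univ b) (Set.mem_univ a) hab (hdiff b)
    rw [slope_def_field] at h1
    have hab' : 0 < a - b := by linarith
    have h2 := (lt_div_iff₀ hab').mp h1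
    nlinarith

/-- If `α*` minimizes the population Bregman–Riesz objective
`BD_g(α) = E[-g(α(X)) + g'(α(X))α(X) - m(W, g'∘α)]` over a class `A`
containing the true Riesz representer `α₀`, then `α* = α₀` almost everywhere
with respect to the distribution of `X`. -/
theorem bregman_riesz_population_minimizer
    {Ω 𝒳 : Type*} [MeasurableSpace Ω] [MeasurableSpace 𝒳]
    (P : Measure Ω) [IsProbabilityMeasure P]
    (X : Ω → 𝒳) (hX : Measurable X)
    (m : Ω → (𝒳 → ℝ) → ℝ)
    (α₀ αstar : 𝒳 → ℝ) (hα₀meas : Measurable α₀) (hαsmeas : Measurable αstar)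
    (g : ℝ → ℝ)
    (hdiff : Differentiable ℝ g) (hconv : StrictConvexOn ℝ Set.univ g)
    (hRiesz : ∀ γ : 𝒳 → ℝ, ∫ ω, m ω γ ∂P = ∫ ω, α₀ (X ω) * γ (X ω) ∂P)
    (A : Set (𝒳 → ℝ)) (hα₀A : α₀ ∈ A) (hαsA : αstar ∈ A)
    (hint1 : ∀ β ∈ A, Integrable (fun ω => g (β (X ω))) P)
    (hint2 : ∀ β ∈ A, Integrable (fun ω => deriv g (β (X ω)) * β (X ω)) P)
    (hint3 : ∀ β ∈ A, Integrable (fun ω => m ω (deriv g ∘ β)) P)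
    (hintBD : Integrable (fun ω =>
        g (α₀ (X ω)) - g (αstar (X ω))
          - deriv g (αstar (X ω)) * (α₀ (X ω) - αstar (X ω))) P)
    (hmin : ∀ β ∈ A,
      (∫ ω, (- g (αstar (X ω)) + deriv g (αstar (X ω)) * αstar (X ω)
          - m ω (deriv g ∘ αstar)) ∂P)
        ≤ ∫ ω, (- g (β (X ω)) + deriv g (β (X ω)) * β (X ω)
            - m ω (deriv g ∘ β)) ∂P) :
    ∀ᵐ x ∂(Measure.map X P), αstar x = α₀ x := by
  -- integrability of α₀ ⬝ g'(α*)
  have eα : Integrable (fun ω => α₀ (X ω) * deriv g (αstar (X ω))) P := by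
    have h : Integrable (fun ω => g (α₀ (X ω)) - g (αstar (X ω))
        + deriv g (αstar (X ω)) * αstar (X ω)
        - (g (α₀ (X ω)) - g (αstar (X ω))
          - deriv g (αstar (X ω)) * (α₀ (X ω) - αstar (X ω)))) P := by
      exact (((hint1 α₀ hα₀A).sub (hint1 αstar hαsA)).add (hint2 αstar hαsA)).sub hintBD
    refine h.congr (Filter.Eventually.of_forall fun ω => ?_)
    ring
  have en1 : Integrable (fun ω => - g (αstar (X ω))) P := by
    exact (hint1 αstar hαsA).neg
  have en2 : Integrable (fun ω => - g (α₀ (X ω))) P := by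
    exact (hint1 α₀ hα₀A).neg
  have eneg1 : Integrable (fun ω => - g (αstar (X ω))
      + deriv g (αstar (X ω)) * αstar (X ω)) P := by
    exact en1.add (hint2 αstar hαsA)
  have eneg2 : Integrable (fun ω => - g (α₀ (X ω))
      + deriv g (α₀ (X ω)) * α₀ (X ω)) P := by
    exact en2.add (hint2 α₀ hα₀A)
  -- expand the minimization inequality for β = α₀
  have h1 := hmin α₀ hα₀A
  have LHS_eq : ∫ ω, (- g (αstar (X ω)) + deriv g (αstar (X ω)) * αstar (X ω)
      - m ω (deriv g ∘ αstar)) ∂P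
      = - ∫ ω, g (αstar (X ω)) ∂P + ∫ ω, deriv g (αstar (X ω)) * αstar (X ω) ∂P
        - ∫ ω, α₀ (X ω) * deriv g (αstar (X ω)) ∂P := by
    rw [integral_sub eneg1 (hint3 αstar hαsA),
        integral_add en1 (hint2 αstar hαsA), integral_neg,
        hRiesz (deriv g ∘ αstar)]
    rfl
  have RHS_eq : ∫ ω, (- g (α₀ (X ω)) + deriv g (α₀ (X ω)) * α₀ (X ω)
      - m ω (deriv g ∘ α₀)) ∂P = - ∫ ω, g (α₀ (X ω)) ∂P := by
    rw [integral_sub eneg2 (hint3 α₀ hα₀A),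
        integral_add en2 (hint2 α₀ hα₀A), integral_neg,
        hRiesz (deriv g ∘ α₀)]
    have h2 : ∫ ω, α₀ (X ω) * (deriv g ∘ α₀) (X ω) ∂P
        = ∫ ω, deriv g (α₀ (X ω)) * α₀ (X ω) ∂P := by
      congr 1; funext ω; simp [Function.comp, mul_comm]
    rw [h2]; ring
  rw [LHS_eq, RHS_eq] at h1
  -- the integral of the Bregman divergence is ≤ 0
  have e4 : Integrable (fun ω => g (α₀ (X ω)) - g (αstar (X ω))) P := by
    exact (hint1 α₀ hα₀A).sub (hint1 αstar hαsA)
  have e3 : Integrable (fun ω => g (α₀ (X ω)) - g (αstar (X ω))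
      - α₀ (X ω) * deriv g (αstar (X ω))) P := by
    exact e4.sub eα
  have hBDle : ∫ ω, (g (α₀ (X ω)) - g (αstar (X ω))
      - deriv g (αstar (X ω)) * (α₀ (X ω) - αstar (X ω))) ∂P ≤ 0 := by
    have expand : (fun ω => g (α₀ (X ω)) - g (αstar (X ω))
        - deriv g (αstar (X ω)) * (α₀ (X ω) - αstar (X ω)))
        = fun ω => (g (α₀ (X ω)) - g (αstar (X ω))
          - α₀ (X ω) * deriv g (αstar (X ω))) + deriv g (αstar (X ω)) * αstar (X ω) := by
      funext ω; ring
    rw [expand, integral_add e3 (hint2 αstar hαsA),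
      integral_sub e4 eα, integral_sub (hint1 α₀ hα₀A) (hint1 αstar hαsA)]
    linarith
  -- pointwise nonnegativity
  have hpt : ∀ ω, 0 ≤ g (α₀ (X ω)) - g (αstar (X ω))
      - deriv g (αstar (X ω)) * (α₀ (X ω) - αstar (X ω)) := by
    intro ω
    by_cases h : α₀ (X ω) = αstar (X ω)
    · rw [h]; simp
    · exact (bregman_pos_of_ne hdiff hconv h).le
  have hzero : ∫ ω, (g (α₀ (X ω)) - g (αstar (X ω))
      - deriv g (αstar (X ω)) * (α₀ (X ω) - αstar (X ω))) ∂P = 0 :=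
    le_antisymm hBDle (integral_nonneg hpt)
  have hae := (integral_eq_zero_iff_of_nonneg hpt hintBD).mp hzero
  have haeq : ∀ᵐ ω ∂P, αstar (X ω) = α₀ (X ω) := by
    filter_upwards [hae] with ω hω
    by_contra hne
    have hne' : α₀ (X ω) ≠ αstar (X ω) := fun h => hne h.symm
    have hpos := bregman_pos_of_ne hdiff hconv hne'
    have hω0 : g (α₀ (X ω)) - g (αstar (X ω))
        - deriv g (αstar (X ω)) * (α₀ (X ω) - αstar (X ω)) = 0 := by simpa using hω
    linarith
  rw [MeasureTheory.ae_map_iff hX.aemeasurable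
    (measurableSet_eq_fun hαsmeas hα₀meas)]
  exact haeq
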